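/- Let K ≥ 1 and T ≥ 1 be natural numbers, let S be a finite set, and let z : {1,…,K} × {0,…,T−1} → S be any function (a sequence of visited elements over K episodes of length T). For each episode k and s ∈ S, let N_k(s) := #{(κ, τ) : 1 ≤ κ ≤ k−1, 0 ≤ τ ≤ T−1, z(κ, τ) = s} be the number of occurrences of s in episodes strictly before k. Then the number of pairs (k, t) with 1 ≤ k ≤ K and 0 ≤ t ≤ T−1 such that N_k(z(k, t)) ≤ T is at most 2·T·|S|. -/
import Mathlib


/-- Over `K` episodes of length `T`, the number of time steps `(k, t)` at which
the visit count (in strictly earlier episodes) of the currently visited element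
`z(k, t)` is at most `T` is bounded by `2·T·|S|`. -/
theorem low_visit_count_steps_bound
    (K T : ℕ) (hK : 1 ≤ K) (hT : 1 ≤ T)
    {S : Type*} [Fintype S] [DecidableEq S]
    (z : Fin K → Fin T → S) :
    (Finset.univ.filter (fun kt : Fin K × Fin T =>
        (Finset.univ.filter (fun κτ : Fin K × Fin T =>
            κτ.1 < kt.1 ∧ z κτ.1 κτ.2 = z kt.1 kt.2)).card ≤ T)).card
      ≤ 2 * T * Fintype.card S := by
  classical
  set P : Fin K × Fin T → Prop := fun kt =>
    (Finset.univ.filter (fun κτ : Fin K × Fin T =>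
        κτ.1 < kt.1 ∧ z κτ.1 κτ.2 = z kt.1 kt.2)).card ≤ T with hP
  have key : ∀ s : S,
      (Finset.univ.filter (fun kt : Fin K × Fin T =>
        P kt ∧ z kt.1 kt.2 = s)).card ≤ 2 * T := by
    intro s
    set B := Finset.univ.filter (fun kt : Fin K × Fin T =>
        P kt ∧ z kt.1 kt.2 = s) with hB
    by_cases hBe : B.Nonempty
    · obtain ⟨m, hmB, hmax⟩ := B.exists_max_image (fun kt => kt.1) hBe
      have hmB' := Finset.mem_filter.mp hmB
      have hmP := hmB'.2.1
      have hms := hmB'.2.2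
      set B1 := Finset.univ.filter (fun kt : Fin K × Fin T =>
          kt.1 < m.1 ∧ z kt.1 kt.2 = s) with hB1
      set B2 := Finset.univ.filter (fun kt : Fin K × Fin T => kt.1 = m.1) with hB2
      have hsub : B ⊆ B1 ∪ B2 := by
        intro b hb
        have hb' := Finset.mem_filter.mp hb
        rcases lt_or_eq_of_le (hmax b hb) with h | h
        · exact Finset.mem_union_left _ (Finset.mem_filter.mpr ⟨Finset.mem_univ _, h, hb'.2.2⟩)
        · exact Finset.mem_union_right _ (Finset.mem_filter.mpr ⟨Finset.mem_univ _, h⟩)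
      have h1 : B1.card ≤ T := by
        have : B1 = Finset.univ.filter (fun κτ : Fin K × Fin T =>
            κτ.1 < m.1 ∧ z κτ.1 κτ.2 = z m.1 m.2) := by
          rw [hB1, hms]
        rw [this]; exact hmP
      have h2 : B2.card ≤ T := by
        have : B2.card ≤ (Finset.univ : Finset (Fin T)).card := by
          apply Finset.card_le_card_of_injOn (fun kt => kt.2)
          · intro a _; exact Finset.mem_univ _
          · intro a ha b hb hab
            have ha' := (Finset.mem_filter.mp ha).2
            have hb' := (Finset.mem_filter.mp hb).2
            exact Prod.ext (ha'.trans hb'.symm) hab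
        simpa using this
      calc B.card ≤ (B1 ∪ B2).card := Finset.card_le_card hsub
        _ ≤ B1.card + B2.card := Finset.card_union_le _ _
        _ ≤ T + T := Nat.add_le_add h1 h2
        _ = 2 * T := by ring
    · rw [Finset.not_nonempty_iff_eq_empty] at hBe
      simp [hBe]
  have hsplit : Finset.univ.filter P =
      Finset.univ.biUnion (fun s : S => Finset.univ.filter
        (fun kt : Fin K × Fin T => P kt ∧ z kt.1 kt.2 = s)) := by
    ext kt
    simp [Finset.mem_biUnion]
  calc (Finset.univ.filter P).card
      ≤ ∑ s : S, (Finset.univ.filter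
          (fun kt : Fin K × Fin T => P kt ∧ z kt.1 kt.2 = s)).card := by
        rw [hsplit]; exact Finset.card_biUnion_le
    _ ≤ ∑ _s : S, 2 * T := Finset.sum_le_sum fun s _ => key s
    _ = 2 * T * Fintype.card S := by simp [mul_comm]
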